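/- Fix d ≥ 2 and a ∈ ℤ_p; let L^d(a) be the ℤ_p-Lie lattice with basis (x₀,...,x_{d-1}) and brackets [x_i,x_j]=0, [x₀,x_i] = a·x_i for 1 ≤ i,j ≤ d−1. Then every ℤ_p-submodule of L^d(a) is a Lie subalgebra, and every subalgebra generated by two elements has dimension at most 2. -/

import Mathlib

/-- In `L^d(a)` (basis `(x₀,…,x_{d−1})`, `[x_i,x_j]=0`,
`[x₀,x_i]=a·x_i` for `i,j ≥ 1`), every `ℤ_p`-submodule is a Lie subalgebra, and
every subalgebra generated by two elements has dimension at most 2. -/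
theorem stmt_9 (p : ℕ) [Fact p.Prime] (d : ℕ) (hd : 2 ≤ d) (a : ℤ_[p])
    (L : Type*) [LieRing L] [LieAlgebra ℤ_[p] L]
    (b : Module.Basis (Fin d) ℤ_[p] L)
    (hab : ∀ i j : Fin d, i ≠ ⟨0, by omega⟩ → j ≠ ⟨0, by omega⟩ → ⁅b i, b j⁆ = 0)
    (h0 : ∀ i : Fin d, i ≠ ⟨0, by omega⟩ → ⁅b ⟨0, by omega⟩, b i⁆ = a • b i) :
    (∀ N : Submodule ℤ_[p] L, ∀ x ∈ N, ∀ y ∈ N, ⁅x, y⁆ ∈ N) ∧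
    (∀ x y : L, Module.finrank ℤ_[p]
      ↥(LieSubalgebra.lieSpan ℤ_[p] L {x, y}).toSubmodule ≤ 2) := by
  classical
  set z : Fin d := ⟨0, by omega⟩ with hz
  set g : L →ₗ[ℤ_[p]] L →ₗ[ℤ_[p]] L :=
    LinearMap.mk₂ ℤ_[p] (fun x y => a • ((b.coord z x) • y - (b.coord z y) • x))
      (by intro x x' y; simp [add_smul, smul_sub, smul_add]; module)
      (by intro c x y; simp [smul_sub, smul_smul]; module)
      (by intro x y y'; simp [add_smul, smul_sub, smul_add]; module)
      (by intro c x y; simp [smul_sub, smul_smul]; module) with hg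
  have key : ∀ x y : L, ⁅x, y⁆ = a • ((b.coord z x) • y - (b.coord z y) • x) := by
    have heq : (LieAlgebra.ad ℤ_[p] L : L →ₗ[ℤ_[p]] Module.End ℤ_[p] L) = g := by
      apply b.ext
      intro i
      apply b.ext
      intro j
      rcases eq_or_ne i z with hi | hi
      · rcases eq_or_ne j z with hj | hj
        · subst hi hj; simp [hg, LieAlgebra.ad_apply]
        · subst hi
          simp [hg, LieAlgebra.ad_apply, h0 j hj, Module.Basis.coord_apply,
            Finsupp.single_apply, hj]
      · rcases eq_or_ne j z with hj | hj
        · subst hj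
          have hskew : ⁅b i, b z⁆ = -(a • b i) := by
            rw [← lie_skew, h0 i hi]
          simp [hg, LieAlgebra.ad_apply, hskew, Module.Basis.coord_apply,
            Finsupp.single_apply, hi]
        · simp [hg, LieAlgebra.ad_apply, hab i j hi hj, Module.Basis.coord_apply,
            Finsupp.single_apply, hi, hj]
    intro x y
    have h1 := LinearMap.congr_fun (LinearMap.congr_fun heq x) y
    simpa [hg, LieAlgebra.ad_apply] using h1
  have part1 : ∀ N : Submodule ℤ_[p] L, ∀ x ∈ N, ∀ y ∈ N, ⁅x, y⁆ ∈ N := by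
    intro N x hx y hy
    rw [key]
    exact N.smul_mem _ (N.sub_mem (N.smul_mem _ hy) (N.smul_mem _ hx))
  refine ⟨part1, ?_⟩
  intro x y
  haveI : Module.Finite ℤ_[p] L := Module.Finite.of_basis b
  set K : LieSubalgebra ℤ_[p] L :=
    { Submodule.span ℤ_[p] {x, y} with
      lie_mem' := fun hu hv => part1 _ _ hu _ hv } with hK
  have hle : LieSubalgebra.lieSpan ℤ_[p] L {x, y} ≤ K := by
    rw [LieSubalgebra.lieSpan_le]
    exact Submodule.subset_span
  have h2 : Module.finrank ℤ_[p] ↥K.toSubmodule ≤ 2 := by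
    have h3 := finrank_span_finset_le_card (R := ℤ_[p]) ({x, y} : Finset L)
    have h4 : (({x, y} : Finset L) : Set L) = ({x, y} : Set L) := by simp
    have h5 : ({x, y} : Finset L).card ≤ 2 := Finset.card_insert_le _ _
    calc Module.finrank ℤ_[p] ↥K.toSubmodule
        = Module.finrank ℤ_[p] ↥(Submodule.span ℤ_[p] ({x, y} : Set L)) := rfl
      _ ≤ 2 := by
          rw [← h4]
          exact le_trans h3 h5
  exact le_trans (Submodule.finrank_mono hle) h2
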